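/- Let u = (u_0,…,u_c) have all components strictly positive and let ν ∈ ℕ₀^c satisfy ν_1 + ⋯ + ν_c = n. Then V(·,u) attains a global minimum on 𝒮(ν) at a unique point x_ss ∈ 𝒮(ν); moreover V(x,u) > V(x_ss,u) for every x ∈ 𝒮(ν) with x ≠ x_ss, and ∇_x V(x_ss,u) = 0. -/

import Mathlib

open Finset Filter Topology

/-- The normalized energy function `V(x,u)` of `n` charged particles at positions `x` with
`c+1` electrodes at positions `q` carrying charges `u`. -/
noncomputable def energy (n c : ℕ) (q u : Fin (c + 1) → ℝ) (x : Fin n → ℝ) : ℝ :=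
  (1 / 2) * ∑ i : Fin n, ∑ j ∈ Finset.univ \ {i}, 1 / |x i - x j| +
    ∑ i : Fin n, ∑ j : Fin (c + 1), u j / |x i - q j|

/-- The simplified state space `𝒮₀ = {x : q₀ < x₁ < ⋯ < xₙ < q_c}`. -/
def stateSpace (n c : ℕ) (q : Fin (c + 1) → ℝ) : Set (Fin n → ℝ) :=
  {x | (∀ i j : Fin n, i < j → x i < x j) ∧ ∀ i, q 0 < x i ∧ x i < q (Fin.last c)}

/-- The region of attraction `𝒮(ν)`: the subset of `𝒮₀` where, for each `k`, the consecutive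
coordinates with indices in `[ν₁+⋯+ν_{k-1}, ν₁+⋯+ν_k)` lie strictly between `q_{k-1}` and `q_k`. -/
def roa (n c : ℕ) (q : Fin (c + 1) → ℝ) (ν : Fin c → ℕ) : Set (Fin n → ℝ) :=
  {x | x ∈ stateSpace n c q ∧ ∀ k : Fin c, ∀ m : Fin n,
    (∑ j ∈ Finset.Iio k, ν j) ≤ (m : ℕ) → (m : ℕ) < (∑ j ∈ Finset.Iio k, ν j) + ν k →
    q k.castSucc < x m ∧ x m < q k.succ}

/-- The set of points whose coordinates are pairwise distinct and distinct from all
electrode positions. -/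
def goodSet (n c : ℕ) (q : Fin (c + 1) → ℝ) : Set (Fin n → ℝ) :=
  {x | (∀ i j : Fin n, i ≠ j → x i ≠ x j) ∧ ∀ (i : Fin n) (j : Fin (c + 1)), x i ≠ q j}

/-- The Hessian matrix of `V(·,u)` at `x`. -/
noncomputable def hessian (n c : ℕ) (q u : Fin (c + 1) → ℝ) (x : Fin n → ℝ) :
    Matrix (Fin n) (Fin n) ℝ :=
  fun k i => iteratedFDeriv ℝ 2 (energy n c q u) x ![Pi.single k 1, Pi.single i 1]

open Set
open scoped ENNReal

section blk
variable {c : ℕ} (ν : Fin c → ℕ)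

lemma sum_Iic_eq (k : Fin c) : ∑ j ∈ Finset.Iic k, ν j = (∑ j ∈ Finset.Iio k, ν j) + ν k := by
  rw [← Finset.Iio_insert, Finset.sum_insert (by simp), add_comm]

lemma sum_Iic_le_Iio (k k' : Fin c) (h : k < k') :
    ∑ j ∈ Finset.Iic k, ν j ≤ ∑ j ∈ Finset.Iio k', ν j := by
  apply Finset.sum_le_sum_of_subset
  intro j hj
  simp only [Finset.mem_Iic] at hj
  simp only [Finset.mem_Iio]
  exact lt_of_le_of_lt hj h

lemma exists_blk (hc : 0 < c) (m : ℕ) (hm : m < ∑ j, ν j) :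
    ∃ k : Fin c, (∑ j ∈ Finset.Iio k, ν j) ≤ m ∧ m < (∑ j ∈ Finset.Iio k, ν j) + ν k := by
  classical
  set T : Finset (Fin c) := Finset.univ.filter (fun k => (∑ j ∈ Finset.Iio k, ν j) ≤ m) with hT
  have hne : T.Nonempty := by
    refine ⟨⟨0, hc⟩, ?_⟩
    simp only [hT, Finset.mem_filter, Finset.mem_univ, true_and]
    have : Finset.Iio (⟨0, hc⟩ : Fin c) = ∅ := by
      ext j; simp [Fin.lt_def]
    simp [this]
  refine ⟨T.max' hne, (Finset.mem_filter.1 (T.max'_mem hne)).2, ?_⟩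
  set k := T.max' hne with hk
  by_contra hcon
  push_neg at hcon
  rw [← sum_Iic_eq] at hcon
  rcases lt_or_eq_of_le (Nat.succ_le_of_lt k.isLt) with h1 | h1
  · set k' : Fin c := ⟨(k : ℕ) + 1, h1⟩ with hk'
    have hIic : Finset.Iic k = Finset.Iio k' := by
      ext j
      simp only [hk', hk, Finset.mem_Iic, Finset.mem_Iio, Fin.lt_def, Fin.le_def, Fin.val_mk]
      omega
    have hk'T : k' ∈ T := by
      simp only [hT, Finset.mem_filter, Finset.mem_univ, true_and]
      rw [← hIic]; exact hcon
    have := Finset.le_max' T k' hk'T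
    have hlt : k < k' := by simp [Fin.lt_def, hk']
    exact absurd this (not_le.2 hlt)
  · have hIic : Finset.Iic k = Finset.univ := by
      ext j; simp only [Finset.mem_Iic, Finset.mem_univ, iff_true, Fin.le_def]
      omega
    rw [hIic] at hcon
    omega

lemma blk_unique (k k' : Fin c) (m : ℕ)
    (h1 : (∑ j ∈ Finset.Iio k, ν j) ≤ m) (h2 : m < (∑ j ∈ Finset.Iio k, ν j) + ν k)
    (h1' : (∑ j ∈ Finset.Iio k', ν j) ≤ m) (h2' : m < (∑ j ∈ Finset.Iio k', ν j) + ν k') :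
    k = k' := by
  by_contra hne
  rcases lt_or_gt_of_ne hne with h | h
  · have := sum_Iic_le_Iio ν k k' h
    rw [sum_Iic_eq] at this
    omega
  · have := sum_Iic_le_Iio ν k' k h
    rw [sum_Iic_eq] at this
    omega

end blk

lemma strictConvexOn_inv' : StrictConvexOn ℝ (Set.Ioi (0:ℝ)) (fun t => t⁻¹) := by
  have h := strictConvexOn_zpow (m := -1) (by norm_num) (by norm_num)
  simpa using h

lemma convexOn_inv_comp {n : ℕ} (S : Set (Fin n → ℝ)) (hS : Convex ℝ S)
    (L : (Fin n → ℝ) →ₗ[ℝ] ℝ) (b : ℝ) (h : ∀ x ∈ S, 0 < L x + b) :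
    ConvexOn ℝ S (fun x => (L x + b)⁻¹) := by
  refine ⟨hS, fun x hx y hy a a' ha ha' hab => ?_⟩
  have h1 := strictConvexOn_inv'.convexOn.2 (mem_Ioi.2 (h x hx)) (mem_Ioi.2 (h y hy)) ha ha' hab
  simp only [smul_eq_mul] at h1 ⊢
  have h2 : L (a • x + a' • y) + b = a * (L x + b) + a' * (L y + b) := by
    have := (L.map_add (a • x) (a' • y))
    rw [this, L.map_smul, L.map_smul]
    simp only [smul_eq_mul]
    linear_combination (-b) * hab
  rw [h2]; exact h1

lemma strictConvexOn_sum_inv {n : ℕ} (S : Set (Fin n → ℝ)) (hS : Convex ℝ S)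
    (r w : ℝ) (hw : 0 < w) (h : ∀ x ∈ S, ∀ i, r < x i) :
    StrictConvexOn ℝ S (fun x => ∑ i, w * (x i - r)⁻¹) := by
  have key : ∀ z z' a a' : ℝ, r < z → r < z' → 0 < a → 0 < a' → a + a' = 1 →
      w * ((a * z + a' * z') - r)⁻¹ ≤ a * (w * (z - r)⁻¹) + a' * (w * (z' - r)⁻¹) := by
    intro z z' a a' hz hz' ha ha' hab
    have h1 := strictConvexOn_inv'.convexOn.2 (mem_Ioi.2 (sub_pos.2 hz))
      (mem_Ioi.2 (sub_pos.2 hz')) ha.le ha'.le hab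
    simp only [smul_eq_mul] at h1
    have h2 : (a * z + a' * z') - r = a * (z - r) + a' * (z' - r) := by
      linear_combination r * hab
    rw [h2]
    nlinarith [h1, hw.le]
  have keys : ∀ z z' a a' : ℝ, r < z → r < z' → z ≠ z' → 0 < a → 0 < a' → a + a' = 1 →
      w * ((a * z + a' * z') - r)⁻¹ < a * (w * (z - r)⁻¹) + a' * (w * (z' - r)⁻¹) := by
    intro z z' a a' hz hz' hne ha ha' hab
    have h1 := strictConvexOn_inv'.2 (mem_Ioi.2 (sub_pos.2 hz))
      (mem_Ioi.2 (sub_pos.2 hz'))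
      (by intro hh; apply hne; linarith [sub_left_injective.eq_iff.1 hh]) ha ha' hab
    simp only [smul_eq_mul] at h1
    have h2 : (a * z + a' * z') - r = a * (z - r) + a' * (z' - r) := by
      linear_combination r * hab
    rw [h2]
    nlinarith [h1, hw]
  refine ⟨hS, fun x hx y hy hxy a a' ha ha' hab => ?_⟩
  obtain ⟨i0, hi0⟩ : ∃ i, x i ≠ y i := Function.ne_iff.1 hxy
  rw [smul_eq_mul, smul_eq_mul, Finset.mul_sum, Finset.mul_sum, ← Finset.sum_add_distrib]
  apply Finset.sum_lt_sum
  · intro i _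
    have hcoord : (a • x + a' • y) i = a * x i + a' * y i := by simp
    rw [hcoord]
    exact key _ _ _ _ (h x hx i) (h y hy i) ha ha' hab
  · refine ⟨i0, Finset.mem_univ i0, ?_⟩
    have hcoord : (a • x + a' • y) i0 = a * x i0 + a' * y i0 := by simp
    rw [hcoord]
    exact keys _ _ _ _ (h x hx i0) (h y hy i0) hi0 ha ha' hab

lemma convexOn_finsum {n : ℕ} {ι : Type*} [DecidableEq ι] (t : Finset ι) (S : Set (Fin n → ℝ))
    (hS : Convex ℝ S) (f : ι → (Fin n → ℝ) → ℝ) (h : ∀ i ∈ t, ConvexOn ℝ S (f i)) :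
    ConvexOn ℝ S (fun x => ∑ i ∈ t, f i x) := by
  induction t using Finset.induction_on with
  | empty => simpa using convexOn_const 0 hS
  | @insert a s hni ih =>
    simp only [Finset.sum_insert hni]
    exact (h a (Finset.mem_insert_self a s)).add (ih fun i hi => h i (Finset.mem_insert_of_mem hi))

lemma cvx3 {a b : ℝ} (ha : 0 ≤ a) (hb : 0 ≤ b) (hab : a + b = 1) {p r p' r' : ℝ}
    (h1 : p < r) (h2 : p' < r') : a * p + b * p' < a * r + b * r' := by
  rcases eq_or_lt_of_le ha with h | h
  · have hb1 : b = 1 := by linarith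
    rw [← h, hb1]; simpa using h2
  · nlinarith [mul_nonneg hb (sub_nonneg.2 h2.le), mul_pos h (sub_pos.2 h1)]

/-- For a control `u` with all components strictly positive, `V(·,u)` attains a global
minimum on `𝒮(ν)` at a unique point `x_ss`: `V(x,u) > V(x_ss,u)` for all `x ∈ 𝒮(ν)`,
`x ≠ x_ss`, and `∇ₓV(x_ss,u) = 0`. -/
theorem stmt12 (n c : ℕ) (hn : 1 ≤ n) (hc : 1 ≤ c)
    (q : Fin (c + 1) → ℝ) (hq : StrictMono q)
    (u : Fin (c + 1) → ℝ) (hu : ∀ j, 0 < u j)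
    (ν : Fin c → ℕ) (hν : ∑ k, ν k = n) :
    ∃! xss : Fin n → ℝ, xss ∈ roa n c q ν ∧
      (∀ x ∈ roa n c q ν, x ≠ xss → energy n c q u xss < energy n c q u x) ∧
      fderiv ℝ (energy n c q u) xss = 0 := by
  classical
  have hcpos : 0 < c := hc
  choose K hK1 hK2 using fun m : Fin n =>
    exists_blk ν hcpos m.1 (by rw [hν]; exact m.isLt)
  have hKuniq : ∀ (k : Fin c) (m : Fin n),
      (∑ j ∈ Finset.Iio k, ν j) ≤ (m : ℕ) →
      (m : ℕ) < (∑ j ∈ Finset.Iio k, ν j) + ν k → K m = k :=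
    fun k m h1 h2 => blk_unique ν _ _ _ (hK1 m) (hK2 m) h1 h2
  have hKmono : ∀ m m' : Fin n, m < m' → K m ≤ K m' := by
    intro m m' hmm
    by_contra hcon
    push_neg at hcon
    have h1 := sum_Iic_le_Iio ν (K m') (K m) hcon
    rw [sum_Iic_eq] at h1
    have := hK1 m
    have := hK2 m'
    have hmv : (m : ℕ) < (m' : ℕ) := hmm
    omega
  -- membership facts
  have hmem1 : ∀ x ∈ roa n c q ν, ∀ m : Fin n,
      q ((K m).castSucc) < x m ∧ x m < q ((K m).succ) :=
    fun x hx m => hx.2 (K m) m (hK1 m) (hK2 m)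
  have horder : ∀ x ∈ roa n c q ν, ∀ i j : Fin n, i < j → x i < x j := fun x hx => hx.1.1
  have hbnd : ∀ x ∈ roa n c q ν, ∀ i : Fin n, q 0 < x i ∧ x i < q (Fin.last c) :=
    fun x hx => hx.1.2
  -- sign function
  set s : Fin n → Fin (c + 1) → ℝ :=
    fun m j => if (j : ℕ) ≤ ((K m) : ℕ) then 1 else -1 with hsdef
  have hsign : ∀ x ∈ roa n c q ν, ∀ (m : Fin n) (j : Fin (c + 1)),
      0 < s m j * (x m - q j) := by
    intro x hx m j
    by_cases hj : (j : ℕ) ≤ ((K m) : ℕ)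
    · have hle : q j ≤ q ((K m).castSucc) := by
        apply hq.monotone
        rw [Fin.le_def, Fin.coe_castSucc]
        exact hj
      simp only [hsdef, if_pos hj, one_mul]
      have := (hmem1 x hx m).1
      linarith
    · push_neg at hj
      have hle : q ((K m).succ) ≤ q j := by
        apply hq.monotone
        rw [Fin.le_def, Fin.val_succ]
        omega
      simp only [hsdef, if_neg (not_le.2 hj), neg_one_mul]
      have := (hmem1 x hx m).2
      linarith
  have habs : ∀ x ∈ roa n c q ν, ∀ (m : Fin n) (j : Fin (c + 1)),
      |x m - q j| = s m j * (x m - q j) := by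
    intro x hx m j
    have h := hsign x hx m j
    by_cases hj : (j : ℕ) ≤ ((K m) : ℕ)
    · simp only [hsdef, if_pos hj, one_mul] at h ⊢
      exact abs_of_pos h
    · simp only [hsdef, if_neg hj, neg_one_mul] at h ⊢
      rw [abs_of_neg (by linarith)]
  have habs2 : ∀ x ∈ roa n c q ν, ∀ i j : Fin n, j ≠ i →
      |x i - x j| = x (max i j) - x (min i j) := by
    intro x hx i j hne
    rcases lt_or_gt_of_ne hne.symm with h | h
    · rw [max_eq_right h.le, min_eq_left h.le,
        abs_of_neg (by linarith [horder x hx i j h]), neg_sub]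
    · rw [max_eq_left h.le, min_eq_right h.le,
        abs_of_pos (by linarith [horder x hx j i h])]
  -- convexity of roa
  have hconv : Convex ℝ (roa n c q ν) := by
    intro x hx y hy a b ha hb hab
    have hco : ∀ i : Fin n, (a • x + b • y) i = a * x i + b * y i := by intro i; simp
    have key : ∀ {p r p' r' : ℝ}, p < r → p' < r' → a * p + b * p' < a * r + b * r' :=
      fun h1 h2 => cvx3 ha hb hab h1 h2
    have keyc : ∀ {p : ℝ}, a * p + b * p = p := by
      intro p; linear_combination p * hab
    refine ⟨⟨fun i j hij => ?_, fun i => ⟨?_, ?_⟩⟩, fun k m h1 h2 => ⟨?_, ?_⟩⟩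
    · rw [hco i, hco j]; exact key (horder x hx i j hij) (horder y hy i j hij)
    · rw [hco i, ← keyc (p := q 0)]
      exact key (hbnd x hx i).1 (hbnd y hy i).1
    · rw [hco i, ← keyc (p := q (Fin.last c))]
      exact key (hbnd x hx i).2 (hbnd y hy i).2
    · rw [hco m, ← keyc (p := q k.castSucc)]
      exact key (hx.2 k m h1 h2).1 (hy.2 k m h1 h2).1
    · rw [hco m, ← keyc (p := q k.succ)]
      exact key (hx.2 k m h1 h2).2 (hy.2 k m h1 h2).2
  -- openness of roa
  have hopen : IsOpen (roa n c q ν) := by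
    have he : roa n c q ν =
        (⋂ (p : Fin n × Fin n), {x : Fin n → ℝ | p.1 < p.2 → x p.1 < x p.2}) ∩
        ((⋂ i : Fin n, ({x : Fin n → ℝ | q 0 < x i} ∩ {x : Fin n → ℝ | x i < q (Fin.last c)})) ∩
         (⋂ (p : Fin c × Fin n),
           {x : Fin n → ℝ |
             ((∑ j ∈ Finset.Iio p.1, ν j) ≤ (p.2 : ℕ) ∧
               (p.2 : ℕ) < (∑ j ∈ Finset.Iio p.1, ν j) + ν p.1) →
             x ∈ ({x : Fin n → ℝ | q p.1.castSucc < x p.2} ∩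
               {x : Fin n → ℝ | x p.2 < q p.1.succ})})) := by
      ext x
      simp only [roa, stateSpace, Set.mem_inter_iff, Set.mem_iInter, Set.mem_setOf_eq,
        Prod.forall]
      constructor
      · rintro ⟨⟨h1, h2⟩, h3⟩
        exact ⟨fun i j hij => h1 i j hij, ⟨fun i => ⟨(h2 i).1, (h2 i).2⟩,
          fun k m hkm => ⟨(h3 k m hkm.1 hkm.2).1, (h3 k m hkm.1 hkm.2).2⟩⟩⟩
      · rintro ⟨h1, h2, h3⟩
        exact ⟨⟨fun i j hij => h1 i j hij, fun i => ⟨(h2 i).1, (h2 i).2⟩⟩,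
          fun k m ha hb => ⟨(h3 k m ⟨ha, hb⟩).1, (h3 k m ⟨ha, hb⟩).2⟩⟩
    rw [he]
    refine IsOpen.inter (isOpen_iInter_of_finite fun p => ?_)
      (IsOpen.inter (isOpen_iInter_of_finite fun i => ?_) (isOpen_iInter_of_finite fun p => ?_))
    · by_cases hp : p.1 < p.2
      · have : {x : Fin n → ℝ | p.1 < p.2 → x p.1 < x p.2} = {x | x p.1 < x p.2} := by
          ext; simp [hp]
        rw [this]; exact isOpen_lt (continuous_apply _) (continuous_apply _)
      · have : {x : Fin n → ℝ | p.1 < p.2 → x p.1 < x p.2} = Set.univ := by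
          ext; simp [hp]
        rw [this]; exact isOpen_univ
    · exact (isOpen_lt continuous_const (continuous_apply _)).inter
        (isOpen_lt (continuous_apply _) continuous_const)
    · by_cases hp : (∑ j ∈ Finset.Iio p.1, ν j) ≤ (p.2 : ℕ) ∧
          (p.2 : ℕ) < (∑ j ∈ Finset.Iio p.1, ν j) + ν p.1
      · have : {x : Fin n → ℝ |
            ((∑ j ∈ Finset.Iio p.1, ν j) ≤ (p.2 : ℕ) ∧
              (p.2 : ℕ) < (∑ j ∈ Finset.Iio p.1, ν j) + ν p.1) →
            x ∈ ({x : Fin n → ℝ | q p.1.castSucc < x p.2} ∩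
              {x : Fin n → ℝ | x p.2 < q p.1.succ})} =
            ({x : Fin n → ℝ | q p.1.castSucc < x p.2} ∩
              {x : Fin n → ℝ | x p.2 < q p.1.succ}) := by
          ext; simp only [Set.mem_setOf_eq, Set.mem_inter_iff]; tauto
        rw [this]
        exact (isOpen_lt continuous_const (continuous_apply _)).inter
          (isOpen_lt (continuous_apply _) continuous_const)
      · have : {x : Fin n → ℝ |
            ((∑ j ∈ Finset.Iio p.1, ν j) ≤ (p.2 : ℕ) ∧
              (p.2 : ℕ) < (∑ j ∈ Finset.Iio p.1, ν j) + ν p.1) →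
            x ∈ ({x : Fin n → ℝ | q p.1.castSucc < x p.2} ∩
              {x : Fin n → ℝ | x p.2 < q p.1.succ})} = Set.univ := by
          ext; simp only [Set.mem_setOf_eq, Set.mem_univ, iff_true]; tauto
        rw [this]; exact isOpen_univ
  -- closed superset C
  set C : Set (Fin n → ℝ) := {x | (∀ i j : Fin n, i < j → x i ≤ x j) ∧
      (∀ i, q 0 ≤ x i ∧ x i ≤ q (Fin.last c)) ∧
      ∀ k : Fin c, ∀ m : Fin n,
        (∑ j ∈ Finset.Iio k, ν j) ≤ (m : ℕ) →
        (m : ℕ) < (∑ j ∈ Finset.Iio k, ν j) + ν k →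
        q k.castSucc ≤ x m ∧ x m ≤ q k.succ} with hCdef
  have hsubC : roa n c q ν ⊆ C := fun x hx =>
    ⟨fun i j h => (horder x hx i j h).le,
     fun i => ⟨(hbnd x hx i).1.le, (hbnd x hx i).2.le⟩,
     fun k m h1 h2 => ⟨(hx.2 k m h1 h2).1.le, (hx.2 k m h1 h2).2.le⟩⟩
  have hCclosed : IsClosed C := by
    have he : C =
        (⋂ (p : Fin n × Fin n), {x : Fin n → ℝ | p.1 < p.2 → x p.1 ≤ x p.2}) ∩
        ((⋂ i : Fin n, ({x : Fin n → ℝ | q 0 ≤ x i} ∩ {x : Fin n → ℝ | x i ≤ q (Fin.last c)})) ∩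
         (⋂ (p : Fin c × Fin n),
           {x : Fin n → ℝ |
             ((∑ j ∈ Finset.Iio p.1, ν j) ≤ (p.2 : ℕ) ∧
               (p.2 : ℕ) < (∑ j ∈ Finset.Iio p.1, ν j) + ν p.1) →
             x ∈ ({x : Fin n → ℝ | q p.1.castSucc ≤ x p.2} ∩
               {x : Fin n → ℝ | x p.2 ≤ q p.1.succ})})) := by
      ext x
      simp only [hCdef, Set.mem_inter_iff, Set.mem_iInter, Set.mem_setOf_eq, Prod.forall]
      constructor
      · rintro ⟨h1, h2, h3⟩
        exact ⟨fun i j hij => h1 i j hij, ⟨fun i => ⟨(h2 i).1, (h2 i).2⟩,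
          fun k m hkm => ⟨(h3 k m hkm.1 hkm.2).1, (h3 k m hkm.1 hkm.2).2⟩⟩⟩
      · rintro ⟨h1, h2, h3⟩
        exact ⟨fun i j hij => h1 i j hij, fun i => ⟨(h2 i).1, (h2 i).2⟩,
          fun k m ha hb => ⟨(h3 k m ⟨ha, hb⟩).1, (h3 k m ⟨ha, hb⟩).2⟩⟩
    rw [he]
    refine IsClosed.inter (isClosed_iInter fun p => ?_)
      (IsClosed.inter (isClosed_iInter fun i => ?_) (isClosed_iInter fun p => ?_))
    · by_cases hp : p.1 < p.2
      · have : {x : Fin n → ℝ | p.1 < p.2 → x p.1 ≤ x p.2} = {x | x p.1 ≤ x p.2} := by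
          ext; simp [hp]
        rw [this]; exact isClosed_le (continuous_apply _) (continuous_apply _)
      · have : {x : Fin n → ℝ | p.1 < p.2 → x p.1 ≤ x p.2} = Set.univ := by
          ext; simp [hp]
        rw [this]; exact isClosed_univ
    · exact (isClosed_le continuous_const (continuous_apply _)).inter
        (isClosed_le (continuous_apply _) continuous_const)
    · by_cases hp : (∑ j ∈ Finset.Iio p.1, ν j) ≤ (p.2 : ℕ) ∧
          (p.2 : ℕ) < (∑ j ∈ Finset.Iio p.1, ν j) + ν p.1
      · have : {x : Fin n → ℝ |
            ((∑ j ∈ Finset.Iio p.1, ν j) ≤ (p.2 : ℕ) ∧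
              (p.2 : ℕ) < (∑ j ∈ Finset.Iio p.1, ν j) + ν p.1) →
            x ∈ ({x : Fin n → ℝ | q p.1.castSucc ≤ x p.2} ∩
              {x : Fin n → ℝ | x p.2 ≤ q p.1.succ})} =
            ({x : Fin n → ℝ | q p.1.castSucc ≤ x p.2} ∩
              {x : Fin n → ℝ | x p.2 ≤ q p.1.succ}) := by
          ext; simp only [Set.mem_setOf_eq, Set.mem_inter_iff]; tauto
        rw [this]
        exact (isClosed_le continuous_const (continuous_apply _)).inter
          (isClosed_le (continuous_apply _) continuous_const)
      · have : {x : Fin n → ℝ |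
            ((∑ j ∈ Finset.Iio p.1, ν j) ≤ (p.2 : ℕ) ∧
              (p.2 : ℕ) < (∑ j ∈ Finset.Iio p.1, ν j) + ν p.1) →
            x ∈ ({x : Fin n → ℝ | q p.1.castSucc ≤ x p.2} ∩
              {x : Fin n → ℝ | x p.2 ≤ q p.1.succ})} = Set.univ := by
          ext; simp only [Set.mem_setOf_eq, Set.mem_univ, iff_true]; tauto
        rw [this]; exact isClosed_univ
  have hclosure : closure (roa n c q ν) ⊆ C := closure_minimal hsubC hCclosed
  have hcpt : IsCompact (closure (roa n c q ν)) := by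
    refine IsCompact.of_isClosed_subset (isCompact_Icc
      (a := fun _ : Fin n => q 0) (b := fun _ : Fin n => q (Fin.last c)))
      isClosed_closure (hclosure.trans ?_)
    intro x hx
    exact ⟨fun i => (hx.2.1 i).1, fun i => (hx.2.1 i).2⟩
  -- explicit point of roa
  set x0 : Fin n → ℝ := fun m =>
    q ((K m).castSucc) + (q ((K m).succ) - q ((K m).castSucc)) *
      ((((m : ℕ) - (∑ j ∈ Finset.Iio (K m), ν j) + 1 : ℕ) : ℝ) / ((ν (K m) : ℝ) + 1))
    with hx0def
  have hx0blk : ∀ m : Fin n, q ((K m).castSucc) < x0 m ∧ x0 m < q ((K m).succ) := by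
    intro m
    have hD : 0 < q ((K m).succ) - q ((K m).castSucc) :=
      sub_pos.2 (hq (Fin.castSucc_lt_succ : (K m).castSucc < (K m).succ))
    have hden : (0 : ℝ) < (ν (K m) : ℝ) + 1 := by positivity
    have hnum1 : (0 : ℝ) < (((m : ℕ) - (∑ j ∈ Finset.Iio (K m), ν j) + 1 : ℕ) : ℝ) := by
      have : 0 < (m : ℕ) - (∑ j ∈ Finset.Iio (K m), ν j) + 1 := Nat.succ_pos _
      exact_mod_cast this
    have hnum2 : (((m : ℕ) - (∑ j ∈ Finset.Iio (K m), ν j) + 1 : ℕ) : ℝ) < (ν (K m) : ℝ) + 1 := by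
      have h1 := hK1 m
      have h2 := hK2 m
      have : (m : ℕ) - (∑ j ∈ Finset.Iio (K m), ν j) + 1 ≤ ν (K m) := by omega
      have hcast : (((m : ℕ) - (∑ j ∈ Finset.Iio (K m), ν j) + 1 : ℕ) : ℝ) ≤ (ν (K m) : ℝ) := by
        exact_mod_cast this
      linarith
    constructor
    · have hpos : 0 < (q ((K m).succ) - q ((K m).castSucc)) *
          ((((m : ℕ) - (∑ j ∈ Finset.Iio (K m), ν j) + 1 : ℕ) : ℝ) / ((ν (K m) : ℝ) + 1)) := by
        positivity
      simp only [hx0def]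
      linarith
    · have hfrac : (((m : ℕ) - (∑ j ∈ Finset.Iio (K m), ν j) + 1 : ℕ) : ℝ) / ((ν (K m) : ℝ) + 1) < 1 :=
        (div_lt_one hden).2 hnum2
      have : (q ((K m).succ) - q ((K m).castSucc)) *
          ((((m : ℕ) - (∑ j ∈ Finset.Iio (K m), ν j) + 1 : ℕ) : ℝ) / ((ν (K m) : ℝ) + 1)) <
          (q ((K m).succ) - q ((K m).castSucc)) * 1 := by
        exact mul_lt_mul_of_pos_left hfrac hD
      simp only [hx0def]
      nlinarith
  have hx0mono : ∀ m m' : Fin n, m < m' → x0 m < x0 m' := by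
    intro m m' hmm
    rcases eq_or_lt_of_le (hKmono m m' hmm) with hKe | hKl
    · have hpf : (∑ j ∈ Finset.Iio (K m), ν j) = ∑ j ∈ Finset.Iio (K m'), ν j := by rw [hKe]
      have hnum : ((m : ℕ) - (∑ j ∈ Finset.Iio (K m), ν j) + 1 : ℕ) <
          ((m' : ℕ) - (∑ j ∈ Finset.Iio (K m'), ν j) + 1 : ℕ) := by
        have h1 := hK1 m
        have h1' := hK1 m'
        have hmv : (m : ℕ) < (m' : ℕ) := hmm
        omega
      have hnumR : ((((m : ℕ) - (∑ j ∈ Finset.Iio (K m), ν j) + 1 : ℕ)) : ℝ) <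
          ((((m' : ℕ) - (∑ j ∈ Finset.Iio (K m'), ν j) + 1 : ℕ)) : ℝ) := by exact_mod_cast hnum
      have hD : 0 < q ((K m).succ) - q ((K m).castSucc) :=
        sub_pos.2 (hq (Fin.castSucc_lt_succ : (K m).castSucc < (K m).succ))
      have hden : (0 : ℝ) < (ν (K m) : ℝ) + 1 := by positivity
      have h1m := hK1 m
      have hmv : (m : ℕ) < (m' : ℕ) := hmm
      simp only [hx0def, ← hKe]
      gcongr
    · exact lt_trans (lt_of_lt_of_le (hx0blk m).2 (hq.monotone (by
        rw [Fin.le_def, Fin.val_succ, Fin.coe_castSucc]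
        exact hKl))) (hx0blk m').1
  have hx0roa : x0 ∈ roa n c q ν := by
    refine ⟨⟨hx0mono, fun i => ⟨?_, ?_⟩⟩, fun k m h1 h2 => ?_⟩
    · exact lt_of_le_of_lt (hq.monotone (Fin.zero_le _)) (hx0blk i).1
    · refine lt_of_lt_of_le (hx0blk i).2 (hq.monotone ?_)
      rw [Fin.le_def, Fin.val_succ, Fin.val_last]
      exact (K i).isLt
    · have hk := hKuniq k m h1 h2
      rw [← hk]
      exact hx0blk m
  -- extended energy
  set EV : (Fin n → ℝ) → ℝ≥0∞ := fun x =>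
    ENNReal.ofReal (1 / 2) *
      ∑ i : Fin n, ∑ j ∈ Finset.univ \ {i}, (ENNReal.ofReal |x i - x j|)⁻¹ +
    ∑ i : Fin n, ∑ j : Fin (c + 1), ENNReal.ofReal (u j) * (ENNReal.ofReal |x i - q j|)⁻¹
    with hEVdef
  have hEVcont : Continuous EV := by
    apply Continuous.add
    · apply (ENNReal.continuous_const_mul ENNReal.ofReal_ne_top).comp
      apply continuous_finset_sum
      intro i _
      apply continuous_finset_sum
      intro j _
      exact (ENNReal.continuous_ofReal.comp
        (((continuous_apply i).sub (continuous_apply j)).abs)).inv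
    · apply continuous_finset_sum
      intro i _
      apply continuous_finset_sum
      intro j _
      exact (ENNReal.continuous_const_mul ENNReal.ofReal_ne_top).comp
        ((ENNReal.continuous_ofReal.comp
          (((continuous_apply i).sub continuous_const).abs)).inv)
  have habspos1 : ∀ x ∈ roa n c q ν, ∀ i j : Fin n, j ≠ i → 0 < |x i - x j| := by
    intro x hx i j hne
    rcases lt_or_gt_of_ne hne.symm with h | h
    · have := horder x hx i j h; rw [abs_pos]; intro h0; linarith [sub_eq_zero.1 h0]
    · have := horder x hx j i h; rw [abs_pos]; intro h0; linarith [sub_eq_zero.1 h0]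
  have habspos2 : ∀ x ∈ roa n c q ν, ∀ (m : Fin n) (j : Fin (c + 1)), 0 < |x m - q j| := by
    intro x hx m j
    have h := hsign x hx m j
    rw [abs_pos]
    intro h0
    rw [h0, mul_zero] at h
    exact lt_irrefl 0 h
  have hEVeq : ∀ x ∈ roa n c q ν, EV x = ENNReal.ofReal (energy n c q u x) := by
    intro x hx
    have h1 : (0 : ℝ) ≤ (1 / 2) * ∑ i : Fin n, ∑ j ∈ Finset.univ \ {i}, 1 / |x i - x j| := by
      apply mul_nonneg (by norm_num)
      apply Finset.sum_nonneg; intro i _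
      apply Finset.sum_nonneg; intro j _
      positivity
    have h2 : (0 : ℝ) ≤ ∑ i : Fin n, ∑ j : Fin (c + 1), u j / |x i - q j| := by
      apply Finset.sum_nonneg; intro i _
      apply Finset.sum_nonneg; intro j _
      exact div_nonneg (hu j).le (abs_nonneg _)
    have hA : ∑ i : Fin n, ∑ j ∈ Finset.univ \ {i}, (ENNReal.ofReal |x i - x j|)⁻¹ =
        ENNReal.ofReal (∑ i : Fin n, ∑ j ∈ Finset.univ \ {i}, 1 / |x i - x j|) := by
      rw [ENNReal.ofReal_sum_of_nonneg
        (fun i _ => Finset.sum_nonneg fun j _ => by positivity)]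
      refine Finset.sum_congr rfl fun i _ => ?_
      rw [ENNReal.ofReal_sum_of_nonneg (fun j _ => by positivity)]
      refine Finset.sum_congr rfl fun j hj => ?_
      have hji : j ≠ i := by
        simp only [Finset.mem_sdiff, Finset.mem_singleton] at hj
        exact hj.2
      rw [one_div, ENNReal.ofReal_inv_of_pos (habspos1 x hx i j hji)]
    have hB : ∑ i : Fin n, ∑ j : Fin (c + 1),
        ENNReal.ofReal (u j) * (ENNReal.ofReal |x i - q j|)⁻¹ =
        ENNReal.ofReal (∑ i : Fin n, ∑ j : Fin (c + 1), u j / |x i - q j|) := by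
      rw [ENNReal.ofReal_sum_of_nonneg
        (fun i _ => Finset.sum_nonneg fun j _ => div_nonneg (hu j).le (abs_nonneg _))]
      refine Finset.sum_congr rfl fun i _ => ?_
      rw [ENNReal.ofReal_sum_of_nonneg (fun j _ => div_nonneg (hu j).le (abs_nonneg _))]
      refine Finset.sum_congr rfl fun j _ => ?_
      rw [div_eq_mul_inv, ENNReal.ofReal_mul (hu j).le,
        ENNReal.ofReal_inv_of_pos (habspos2 x hx i j)]
    have hgoal : EV x = ENNReal.ofReal (1 / 2) *
        ∑ i : Fin n, ∑ j ∈ Finset.univ \ {i}, (ENNReal.ofReal |x i - x j|)⁻¹ +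
      ∑ i : Fin n, ∑ j : Fin (c + 1),
        ENNReal.ofReal (u j) * (ENNReal.ofReal |x i - q j|)⁻¹ := by
      rw [hEVdef]
    rw [hgoal, hA, hB, ← ENNReal.ofReal_mul (by norm_num : (0:ℝ) ≤ 1/2),
      ← ENNReal.ofReal_add h1 h2]
    rfl
  have hEVtop : ∀ z : Fin n → ℝ,
      ((∃ i j : Fin n, i ≠ j ∧ z i = z j) ∨ (∃ (m : Fin n) (j : Fin (c + 1)), z m = q j)) →
      EV z = ⊤ := by
    intro z hz
    rcases hz with ⟨i, j, hij, hE⟩ | ⟨m, j, hE⟩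
    · have hterm : (ENNReal.ofReal |z i - z j|)⁻¹ = ⊤ := by
        rw [hE, sub_self, abs_zero, ENNReal.ofReal_zero, ENNReal.inv_zero]
      have hsum1 : ∑ j' ∈ Finset.univ \ {i}, (ENNReal.ofReal |z i - z j'|)⁻¹ = ⊤ := by
        rw [ENNReal.sum_eq_top]
        exact ⟨j, by simp [Finset.mem_sdiff, hij.symm], hterm⟩
      have hsum2 : ∑ i' : Fin n, ∑ j' ∈ Finset.univ \ {i'},
          (ENNReal.ofReal |z i' - z j'|)⁻¹ = ⊤ := by
        rw [ENNReal.sum_eq_top]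
        exact ⟨i, Finset.mem_univ i, hsum1⟩
      rw [hEVdef]
      simp only [hsum2]
      rw [ENNReal.mul_top (by rw [Ne, ENNReal.ofReal_eq_zero]; norm_num), top_add _]
    · have hterm : ENNReal.ofReal (u j) * (ENNReal.ofReal |z m - q j|)⁻¹ = ⊤ := by
        rw [hE, sub_self, abs_zero, ENNReal.ofReal_zero, ENNReal.inv_zero,
          ENNReal.mul_top (by rw [Ne, ENNReal.ofReal_eq_zero]; exact not_le.2 (hu j))]
      have hsum1 : ∑ j' : Fin (c + 1), ENNReal.ofReal (u j') * (ENNReal.ofReal |z m - q j'|)⁻¹ = ⊤ := by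
        rw [ENNReal.sum_eq_top]
        exact ⟨j, Finset.mem_univ j, hterm⟩
      have hsum2 : ∑ i' : Fin n, ∑ j' : Fin (c + 1),
          ENNReal.ofReal (u j') * (ENNReal.ofReal |z i' - q j'|)⁻¹ = ⊤ := by
        rw [ENNReal.sum_eq_top]
        exact ⟨m, Finset.mem_univ m, hsum1⟩
      rw [hEVdef]
      simp only [hsum2]
      rw [add_top _]
  -- minimum of EV on the closure
  obtain ⟨z, hzcl, hzmin⟩ := hcpt.exists_isMinOn ⟨x0, subset_closure hx0roa⟩
    hEVcont.continuousOn
  have hzroa : z ∈ roa n c q ν := by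
    by_contra hzout
    have hzC : z ∈ C := hclosure hzcl
    have hbad : (∃ i j : Fin n, i ≠ j ∧ z i = z j) ∨
        (∃ (m : Fin n) (j : Fin (c + 1)), z m = q j) := by
      obtain ⟨hC1, hC2, hC3⟩ := hzC
      by_cases hss : z ∈ stateSpace n c q
      · have hnb : ¬ (∀ k : Fin c, ∀ m : Fin n,
            (∑ j ∈ Finset.Iio k, ν j) ≤ (m : ℕ) →
            (m : ℕ) < (∑ j ∈ Finset.Iio k, ν j) + ν k →
            q k.castSucc < z m ∧ z m < q k.succ) := fun hB => hzout ⟨hss, hB⟩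
        push_neg at hnb
        obtain ⟨k, m, h1, h2, h3⟩ := hnb
        by_cases h4 : q k.castSucc < z m
        · exact Or.inr ⟨m, k.succ, le_antisymm (hC3 k m h1 h2).2 (h3 h4)⟩
        · exact Or.inr ⟨m, k.castSucc, le_antisymm (not_lt.1 h4) (hC3 k m h1 h2).1⟩
      · simp only [stateSpace, Set.mem_setOf_eq] at hss
        rw [not_and_or] at hss
        rcases hss with hss | hss
        · push_neg at hss
          obtain ⟨i, j, hij, h3⟩ := hss
          exact Or.inl ⟨i, j, hij.ne, le_antisymm (hC1 i j hij) h3⟩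
        · push_neg at hss
          obtain ⟨i, h3⟩ := hss
          by_cases h4 : q 0 < z i
          · exact Or.inr ⟨i, Fin.last c, le_antisymm (hC2 i).2 (h3 h4)⟩
          · exact Or.inr ⟨i, 0, le_antisymm (not_lt.1 h4) (hC2 i).1⟩
    have htop := hEVtop z hbad
    have hle := isMinOn_iff.1 hzmin x0 (subset_closure hx0roa)
    rw [htop, hEVeq x0 hx0roa] at hle
    exact ENNReal.ofReal_ne_top (top_le_iff.1 hle)
  -- the convex representation F of the energy on roa
  set F : (Fin n → ℝ) → ℝ := fun x =>
    (∑ m : Fin n, u 0 * (x m - q 0)⁻¹) +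
    ((1 / 2) * ∑ i : Fin n, ∑ j ∈ Finset.univ \ {i}, (x (max i j) - x (min i j))⁻¹ +
     ∑ m : Fin n, ∑ j ∈ Finset.univ \ {(0 : Fin (c + 1))},
       u j * (s m j * (x m - q j))⁻¹) with hFdef
  have hs0 : ∀ m : Fin n, s m 0 = 1 := by
    intro m
    simp only [hsdef]
    rw [if_pos]
    simp
  have hEqF : ∀ x ∈ roa n c q ν, energy n c q u x = F x := by
    intro x hx
    have hsum2 : ∀ m : Fin n, ∑ j : Fin (c + 1), u j / |x m - q j| =
        u 0 * (x m - q 0)⁻¹ +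
          ∑ j ∈ Finset.univ \ {(0 : Fin (c + 1))}, u j * (s m j * (x m - q j))⁻¹ := by
      intro m
      have hterm : ∀ j : Fin (c + 1), u j / |x m - q j| = u j * (s m j * (x m - q j))⁻¹ :=
        fun j => by rw [div_eq_mul_inv, habs x hx m j]
      rw [Finset.sum_congr rfl fun j _ => hterm j,
        Finset.sum_eq_sum_sdiff_singleton_add (Finset.mem_univ (0 : Fin (c + 1)))]
      rw [hs0 m, one_mul, add_comm]
    have hsum1 : ∀ i : Fin n, ∑ j ∈ Finset.univ \ {i}, 1 / |x i - x j| =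
        ∑ j ∈ Finset.univ \ {i}, (x (max i j) - x (min i j))⁻¹ := by
      intro i
      refine Finset.sum_congr rfl fun j hj => ?_
      have hji : j ≠ i := by
        simp only [Finset.mem_sdiff, Finset.mem_singleton] at hj
        exact hj.2
      rw [one_div, habs2 x hx i j hji]
    have he : energy n c q u x =
        (1 / 2) * ∑ i : Fin n, ∑ j ∈ Finset.univ \ {i}, 1 / |x i - x j| +
          ∑ i : Fin n, ∑ j : Fin (c + 1), u j / |x i - q j| := rfl
    rw [he, Finset.sum_congr rfl fun i _ => hsum1 i,
      Finset.sum_congr rfl fun m _ => hsum2 m, Finset.sum_add_distrib, hFdef]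
    ring
  -- strict convexity of F on roa
  have hGstrict : StrictConvexOn ℝ (roa n c q ν)
      (fun x : Fin n → ℝ => ∑ m : Fin n, u 0 * (x m - q 0)⁻¹) :=
    strictConvexOn_sum_inv _ hconv (q 0) (u 0) (hu 0) (fun x hx i => (hbnd x hx i).1)
  have hIconv : ConvexOn ℝ (roa n c q ν)
      (fun x : Fin n → ℝ =>
        (1 / 2) * ∑ i : Fin n, ∑ j ∈ Finset.univ \ {i}, (x (max i j) - x (min i j))⁻¹) := by
    have h1 : ∀ i j : Fin n, j ≠ i →
        ConvexOn ℝ (roa n c q ν) (fun x : Fin n → ℝ => (x (max i j) - x (min i j))⁻¹) := by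
      intro i j hji
      have hlt : min i j < max i j := min_lt_max.2 (Ne.symm hji)
      have h := convexOn_inv_comp (roa n c q ν) hconv
        (LinearMap.proj (R := ℝ) (φ := fun _ : Fin n => ℝ) (max i j) -
          LinearMap.proj (min i j)) 0
        (fun x hx => by simpa using sub_pos.2 (horder x hx _ _ hlt))
      simpa using h
    have h2 : ConvexOn ℝ (roa n c q ν)
        (fun x : Fin n → ℝ =>
          ∑ i : Fin n, ∑ j ∈ Finset.univ \ {i}, (x (max i j) - x (min i j))⁻¹) :=
      convexOn_finsum _ _ hconv _ (fun i _ => convexOn_finsum _ _ hconv _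
        (fun j hj => h1 i j (by
          simp only [Finset.mem_sdiff, Finset.mem_singleton] at hj
          exact hj.2)))
    have h3 := h2.smul (by norm_num : (0 : ℝ) ≤ 1 / 2)
    simpa [smul_eq_mul] using h3
  have hEconv : ConvexOn ℝ (roa n c q ν)
      (fun x : Fin n → ℝ =>
        ∑ m : Fin n, ∑ j ∈ Finset.univ \ {(0 : Fin (c + 1))},
          u j * (s m j * (x m - q j))⁻¹) := by
    refine convexOn_finsum _ _ hconv _ (fun m _ => convexOn_finsum _ _ hconv _
      (fun j _ => ?_))
    have harg : ∀ x : Fin n → ℝ, s m j * (x m - q j) = s m j * x m + -(s m j * q j) :=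
      fun x => by ring
    have hbase := convexOn_inv_comp (roa n c q ν) hconv
      (s m j • LinearMap.proj (R := ℝ) (φ := fun _ : Fin n => ℝ) m) (-(s m j * q j))
      (fun x hx => by
        have hx' := hsign x hx m j
        rw [harg x] at hx'
        simpa only [LinearMap.smul_apply, LinearMap.proj_apply, smul_eq_mul] using hx')
    have h := hbase.smul (hu j).le
    have hfun : (fun x : Fin n → ℝ =>
        u j • (((s m j • LinearMap.proj (R := ℝ) (φ := fun _ : Fin n => ℝ) m) x +
          -(s m j * q j))⁻¹)) =
        fun x : Fin n → ℝ => u j * (s m j * (x m - q j))⁻¹ := by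
      funext x
      simp only [LinearMap.smul_apply, LinearMap.proj_apply, smul_eq_mul]
      rw [← harg x]
    rw [hfun] at h
    exact h
  have hFstrict : StrictConvexOn ℝ (roa n c q ν) F := by
    have h := hGstrict.add_convexOn (hIconv.add hEconv)
    rw [hFdef]
    exact h
  -- z is the strict global minimum of the energy on roa
  have hEnn : ∀ x : Fin n → ℝ, 0 ≤ energy n c q u x := by
    intro x
    apply add_nonneg
    · apply mul_nonneg (by norm_num)
      apply Finset.sum_nonneg; intro i _
      apply Finset.sum_nonneg; intro j _
      positivity
    · apply Finset.sum_nonneg; intro i _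
      apply Finset.sum_nonneg; intro j _
      exact div_nonneg (hu j).le (abs_nonneg _)
  have hmin : ∀ x ∈ roa n c q ν, energy n c q u z ≤ energy n c q u x := by
    intro x hxr
    have hle := isMinOn_iff.1 hzmin x (subset_closure hxr)
    rw [hEVeq z hzroa, hEVeq x hxr] at hle
    exact (ENNReal.ofReal_le_ofReal_iff (hEnn x)).1 hle
  have hstrict : ∀ x ∈ roa n c q ν, x ≠ z →
      energy n c q u z < energy n c q u x := by
    intro x hxr hne
    have hmid : (1/2 : ℝ) • x + (1/2 : ℝ) • z ∈ roa n c q ν :=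
      hconv hxr hzroa (by norm_num) (by norm_num) (by norm_num)
    have h2 := hFstrict.2 hxr hzroa hne (by norm_num : (0:ℝ) < 1/2)
      (by norm_num : (0:ℝ) < 1/2) (by norm_num)
    rw [← hEqF x hxr, ← hEqF z hzroa, ← hEqF _ hmid] at h2
    have h3 := hmin _ hmid
    simp only [smul_eq_mul] at h2 h3
    linarith
  have hloc : IsLocalMin (energy n c q u) z :=
    IsMinOn.isLocalMin (isMinOn_iff.2 hmin) (hopen.mem_nhds hzroa)
  refine ⟨z, ⟨hzroa, hstrict, hloc.fderiv_eq_zero⟩, ?_⟩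
  rintro y ⟨hy, hys, -⟩
  by_contra hne
  have h1 := hys z hzroa (fun h => hne h.symm)
  have h2 := hstrict y hy hne
  linarith
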